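/- Let X be a finite topological space whose specialization order is a partial order (a finite T0 space), and let X^top be the set of maximal points (points ξ with {ξ} open). Then: (1) for each ξ ∈ X^top, cl {ξ} is regular closed; (2) every regular closed subset of X is a union of sets cl {ξ} with ξ ∈ X^top; (3) the map A ↦ cl A from subsets of X^top to regular closed subsets of X is a bijection with inverse U ↦ U ∩ X^top. -/

import Mathlib

open Set

private lemma closure_eq_biUnion' {X : Type*} [TopologicalSpace X] [Finite X] (S : Set X) :
    closure S = ⋃ x ∈ S, closure ({x} : Set X) := by
  conv_lhs => rw [← biUnion_of_singleton S]
  exact S.toFinite.closure_biUnion _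

private lemma exists_top_point {X : Type*} [TopologicalSpace X] [Finite X] [T0Space X]
    {V : Set X} (hV : IsOpen V) {x : X} (hx : x ∈ V) :
    ∃ ξ ∈ V, IsOpen ({ξ} : Set X) ∧ x ∈ closure ({ξ} : Set X) := by
  set S := {z | z ∈ V ∧ x ∈ closure ({z} : Set X)} with hS
  have hxS : x ∈ S := ⟨hx, subset_closure rfl⟩
  obtain ⟨ξ, hξS, hmax⟩ := Set.Finite.exists_maximalFor
      (fun z => (closure ({z} : Set X)).ncard) S S.toFinite ⟨x, hxS⟩
  refine ⟨ξ, hξS.1, ?_, hξS.2⟩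
  by_contra hopen
  have h1 : ξ ∈ closure ({ξ}ᶜ : Set X) := by
    by_contra h
    have hsub : closure ({ξ}ᶜ : Set X) ⊆ {ξ}ᶜ := fun y hy => by
      intro hyξ
      exact h (by rwa [show y = ξ from hyξ] at hy)
    have : IsClosed ({ξ}ᶜ : Set X) :=
      closure_eq_iff_isClosed.mp (le_antisymm hsub subset_closure)
    exact hopen (by simpa using this.isOpen_compl)
  rw [closure_eq_biUnion'] at h1
  obtain ⟨z, hz, hξz⟩ := mem_iUnion₂.mp h1
  have hzξ : z ≠ ξ := hz
  have hsub : closure ({ξ} : Set X) ⊆ closure ({z} : Set X) :=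
    closure_minimal (singleton_subset_iff.2 hξz) isClosed_closure
  have hzV : z ∈ V := by
    obtain ⟨y, hyV, hyz⟩ := _root_.mem_closure_iff.mp hξz V hV hξS.1
    rwa [← hyz]
  have hzS : z ∈ S := ⟨hzV, hsub hξS.2⟩
  have hznot : z ∉ closure ({ξ} : Set X) := by
    intro hmem
    exact hzξ (((specializes_iff_mem_closure.mpr hξz).antisymm
      (specializes_iff_mem_closure.mpr hmem)).eq)
  have hlt : (closure ({ξ} : Set X)).ncard < (closure ({z} : Set X)).ncard :=
    Set.ncard_lt_ncard (ssubset_of_subset_not_subset hsub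
      (fun h => hznot (h (subset_closure rfl)))) (toFinite _)
  exact absurd (hmax hzS hlt.le) (not_le.mpr hlt)

/-- In a finite T0 space, with `Xtop` the set of points whose
singleton is open: (1) `cl {ξ}` is regular closed for `ξ ∈ Xtop`; (2) every
regular closed set is the union of the `cl {ξ}` over its top points; (3) the map
`A ↦ cl A` from subsets of `Xtop` to regular closed sets is a bijection with
inverse `U ↦ U ∩ Xtop`. -/
theorem regular_closed_sets_of_finite_T0 {X : Type*} [TopologicalSpace X]
    [Finite X] [T0Space X] (Xtop : Set X)
    (hXtop : ∀ ξ : X, ξ ∈ Xtop ↔ IsOpen ({ξ} : Set X)) :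
    (∀ ξ ∈ Xtop, closure (interior (closure ({ξ} : Set X))) = closure ({ξ} : Set X)) ∧
    (∀ U : Set X, closure (interior U) = U →
      U = ⋃ ξ ∈ U ∩ Xtop, closure ({ξ} : Set X)) ∧
    (∀ A : Set X, A ⊆ Xtop →
      closure (interior (closure A)) = closure A ∧ closure A ∩ Xtop = A) ∧
    (∀ U : Set X, closure (interior U) = U → closure (U ∩ Xtop) = U) := by
  have part1 : ∀ ξ ∈ Xtop,
      closure (interior (closure ({ξ} : Set X))) = closure ({ξ} : Set X) := by
    intro ξ hξ
    refine le_antisymm (closure_mono interior_subset |>.trans (by rw [closure_closure])) ?_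
    exact closure_mono (((hXtop ξ).mp hξ).subset_interior_iff.mpr subset_closure)
  have part2 : ∀ U : Set X, closure (interior U) = U →
      U = ⋃ ξ ∈ U ∩ Xtop, closure ({ξ} : Set X) := by
    intro U hU
    have hUclosed : IsClosed U := hU ▸ isClosed_closure
    apply le_antisymm
    · intro x hx
      rw [← hU, closure_eq_biUnion'] at hx
      obtain ⟨y, hy, hxy⟩ := mem_iUnion₂.mp hx
      obtain ⟨ξ, hξV, hξopen, hyξ⟩ := exists_top_point isOpen_interior hy
      refine mem_iUnion₂.mpr ⟨ξ, ⟨interior_subset hξV, (hXtop ξ).mpr hξopen⟩, ?_⟩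
      exact closure_minimal (singleton_subset_iff.2 hyξ) isClosed_closure hxy
    · refine iUnion₂_subset fun ξ hξ => ?_
      exact (closure_minimal (singleton_subset_iff.2 hξ.1) hUclosed)
  refine ⟨part1, part2, ?_, ?_⟩
  · intro A hA
    have hAopen : A ⊆ interior (closure A) := fun ξ hξ =>
      (((hXtop ξ).mp (hA hξ)).subset_interior_iff.mpr
        (singleton_subset_iff.2 (subset_closure hξ))) rfl
    constructor
    · refine le_antisymm (closure_mono interior_subset |>.trans (by rw [closure_closure])) ?_
      exact closure_mono hAopen
    · refine le_antisymm ?_ (fun ξ hξ => ⟨subset_closure hξ, hA hξ⟩)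
      rintro η ⟨hηA, hηtop⟩
      rw [closure_eq_biUnion'] at hηA
      obtain ⟨ξ, hξ, hηξ⟩ := mem_iUnion₂.mp hηA
      obtain ⟨y, hy, hyξ⟩ := _root_.mem_closure_iff.mp hηξ {η} ((hXtop η).mp hηtop) rfl
      simp only [mem_singleton_iff] at hy hyξ
      subst hy
      exact hyξ ▸ hξ
  · intro U hU
    have hUclosed : IsClosed U := hU ▸ isClosed_closure
    apply le_antisymm
    · exact closure_minimal Set.inter_subset_left hUclosed
    · intro x hx
      have := part2 U hU ▸ hx
      obtain ⟨ξ, hξ, hxξ⟩ := mem_iUnion₂.mp this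
      exact closure_mono (singleton_subset_iff.2 hξ) hxξ
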